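/- Let K be a compact subset of ℝ of infinite cardinality. For n ≥ 1 let m_n(K) denote the infimum of ‖P‖_K over all monic real polynomials P of degree n. Then the sequence (m_n(K)^{1/n})_{n ≥ 1} converges. -/

import Mathlib

open Polynomial Filter

/-- The sup norm of a real polynomial on a set `K ⊆ ℝ`. -/
noncomputable def supNormOn (K : Set ℝ) (P : Polynomial ℝ) : ℝ :=
  sSup ((fun x => |P.eval x|) '' K)

/-- `m_n(K)`: the infimum of sup norms on `K` of monic real polynomials of degree `n`. -/
noncomputable def chebInf (K : Set ℝ) (n : ℕ) : ℝ :=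
  sInf (supNormOn K '' {P : Polynomial ℝ | P.Monic ∧ P.natDegree = n})

section aux
variable {K : Set ℝ}

lemma bddAbove_absEval (hK : IsCompact K) (P : Polynomial ℝ) :
    BddAbove ((fun x => |P.eval x|) '' K) :=
  (hK.image (Polynomial.continuous P).abs).bddAbove

lemma abs_eval_le_supNormOn (hK : IsCompact K) (P : Polynomial ℝ) {x : ℝ} (hx : x ∈ K) :
    |P.eval x| ≤ supNormOn K P :=
  le_csSup (bddAbove_absEval hK P) ⟨x, hx, rfl⟩

variable (hK : IsCompact K) (hne : K.Nonempty)
include hK hne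

lemma supNormOn_nonneg (P : Polynomial ℝ) : 0 ≤ supNormOn K P := by
  obtain ⟨x, hx⟩ := hne
  exact (abs_nonneg _).trans (abs_eval_le_supNormOn hK P hx)

lemma supNormOn_mul_le (P Q : Polynomial ℝ) :
    supNormOn K (P * Q) ≤ supNormOn K P * supNormOn K Q := by
  apply csSup_le (hne.image _)
  rintro _ ⟨x, hx, rfl⟩
  simp only [eval_mul, abs_mul]
  exact mul_le_mul (abs_eval_le_supNormOn hK P hx) (abs_eval_le_supNormOn hK Q hx)
    (abs_nonneg _) (supNormOn_nonneg hK hne P)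

lemma chebInf_le (P : Polynomial ℝ) (hP : P.Monic) {n : ℕ} (hPn : P.natDegree = n) :
    chebInf K n ≤ supNormOn K P :=
  csInf_le ⟨0, by rintro _ ⟨Q, hQ, rfl⟩; exact supNormOn_nonneg hK hne Q⟩ ⟨P, ⟨hP, hPn⟩, rfl⟩

lemma chebInf_nonneg (n : ℕ) : 0 ≤ chebInf K n :=
  le_csInf ⟨supNormOn K (X ^ n), ⟨X ^ n, ⟨monic_X_pow n, by simp⟩, rfl⟩⟩
    (by rintro _ ⟨Q, hQ, rfl⟩; exact supNormOn_nonneg hK hne Q)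

lemma chebInf_le_pow {M : ℝ} (hM : ∀ x ∈ K, |x| ≤ M) (n : ℕ) :
    chebInf K n ≤ M ^ n := by
  refine (chebInf_le hK hne (X ^ n) (monic_X_pow n) (by simp)).trans ?_
  apply csSup_le (hne.image _)
  rintro _ ⟨x, hx, rfl⟩
  simp only [eval_pow, eval_X, abs_pow]
  exact pow_le_pow_left₀ (abs_nonneg _) (hM x hx) n

lemma chebInf_add_le (a b : ℕ) :
    chebInf K (a + b) ≤ chebInf K a * chebInf K b := by
  refine le_of_forall_gt_imp_ge_of_dense fun c hc => ?_
  set ma := chebInf K a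
  set mb := chebInf K b
  have hma : 0 ≤ ma := chebInf_nonneg hK hne a
  have hmb : 0 ≤ mb := chebInf_nonneg hK hne b
  set δ : ℝ := min 1 ((c - ma * mb) / (ma + mb + 1)) with hδdef
  have hδpos : 0 < δ := lt_min one_pos (div_pos (by linarith) (by linarith))
  have hδ1 : δ ≤ 1 := min_le_left _ _
  have hδ2 : δ ≤ (c - ma * mb) / (ma + mb + 1) := min_le_right _ _
  obtain ⟨p, hpA, hp⟩ : ∃ p ∈ supNormOn K '' {P : Polynomial ℝ | P.Monic ∧ P.natDegree = a},
      p < ma + δ :=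
    exists_lt_of_csInf_lt ⟨supNormOn K (X ^ a), ⟨X ^ a, ⟨monic_X_pow a, by simp⟩, rfl⟩⟩
      (show chebInf K a < ma + δ by linarith)
  obtain ⟨q, hqB, hq⟩ : ∃ q ∈ supNormOn K '' {P : Polynomial ℝ | P.Monic ∧ P.natDegree = b},
      q < mb + δ :=
    exists_lt_of_csInf_lt ⟨supNormOn K (X ^ b), ⟨X ^ b, ⟨monic_X_pow b, by simp⟩, rfl⟩⟩
      (show chebInf K b < mb + δ by linarith)
  obtain ⟨P, ⟨hPm, hPd⟩, rfl⟩ := hpA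
  obtain ⟨Q, ⟨hQm, hQd⟩, rfl⟩ := hqB
  have h1 : chebInf K (a + b) ≤ supNormOn K (P * Q) :=
    chebInf_le hK hne _ (hPm.mul hQm) (by rw [hPm.natDegree_mul hQm, hPd, hQd])
  have h2 := supNormOn_mul_le hK hne P Q
  have h3 : supNormOn K P * supNormOn K Q ≤ (ma + δ) * (mb + δ) :=
    mul_le_mul hp.le hq.le (supNormOn_nonneg hK hne Q) (by linarith)
  have h4 : (ma + δ) * (mb + δ) ≤ c := by
    have h5 : δ * (ma + mb + 1) ≤ c - ma * mb := by
      rw [le_div_iff₀ (by linarith : (0:ℝ) < ma + mb + 1)] at hδ2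
      linarith
    nlinarith
  linarith

lemma chebInf_mul_add_le (k q r : ℕ) :
    chebInf K (k * q + r) ≤ chebInf K k ^ q * chebInf K r := by
  induction q with
  | zero => simp
  | succ q ih =>
      have h1 : k * (q + 1) + r = k + (k * q + r) := by ring
      rw [h1]
      calc chebInf K (k + (k * q + r)) ≤ chebInf K k * chebInf K (k * q + r) :=
            chebInf_add_le hK hne k _
        _ ≤ chebInf K k * (chebInf K k ^ q * chebInf K r) :=
            mul_le_mul_of_nonneg_left ih (chebInf_nonneg hK hne k)
        _ = chebInf K k ^ (q + 1) * chebInf K r := by ring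

end aux

/-- The sequence `m_n(K)^(1/n)` converges. -/
theorem chebInf_pow_inv_converges (K : Set ℝ) (hK : IsCompact K) (hKinf : K.Infinite) :
    ∃ l : ℝ, Tendsto (fun n : ℕ => chebInf K n ^ ((n : ℝ)⁻¹)) atTop (nhds l) := by
  have hne : K.Nonempty := hKinf.nonempty
  set m := chebInf K with hm
  set a : ℕ → ℝ := fun n => m n ^ ((n : ℝ)⁻¹) with ha
  have hm0 : ∀ n, 0 ≤ m n := chebInf_nonneg hK hne
  have ha0 : ∀ n, 0 ≤ a n := fun n => Real.rpow_nonneg (hm0 n) _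
  obtain ⟨C, hC⟩ := (hK.image continuous_abs).bddAbove
  set M : ℝ := max C 1 with hM
  have hM1 : 1 ≤ M := le_max_right _ _
  have hMb : ∀ x ∈ K, |x| ≤ M := fun x hx => (hC ⟨x, hx, rfl⟩).trans (le_max_left _ _)
  have hmM : ∀ n, m n ≤ M ^ n := chebInf_le_pow hK hne hMb
  set L : ℝ := sInf (Set.range fun j : ℕ => a (j + 1)) with hL
  have hbdd : BddBelow (Set.range fun j : ℕ => a (j + 1)) := ⟨0, by rintro _ ⟨j, rfl⟩; exact ha0 _⟩
  have hLa : ∀ n, 1 ≤ n → L ≤ a n := by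
    intro n hn
    exact csInf_le hbdd ⟨n - 1, show a (n-1+1) = a n by rw [Nat.sub_add_cancel hn]⟩
  have hL0 : 0 ≤ L := le_csInf ⟨a 1, ⟨0, rfl⟩⟩ (by rintro _ ⟨j, rfl⟩; exact ha0 _)
  refine ⟨L, Metric.tendsto_atTop.2 fun ε hε => ?_⟩
  obtain ⟨_, ⟨j, rfl⟩, hj⟩ : ∃ v ∈ Set.range fun j : ℕ => a (j + 1), v < L + ε / 2 :=
    exists_lt_of_csInf_lt ⟨a 1, ⟨0, rfl⟩⟩ (show L < L + ε / 2 by linarith)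
  set k : ℕ := j + 1 with hk
  have hkpos : 0 < k := Nat.succ_pos j
  set L' : ℝ := L + ε / 2 with hL'
  have hL'pos : 0 < L' := by positivity
  have hmk : m k < L' ^ k := by
    have h1 : (m k ^ ((k : ℝ)⁻¹)) ^ k < L' ^ k :=
      pow_lt_pow_left₀ hj (ha0 k) hkpos.ne'
    rwa [← Real.rpow_natCast (m k ^ ((k:ℝ)⁻¹)) k, ← Real.rpow_mul (hm0 k),
      inv_mul_cancel₀ (by exact_mod_cast hkpos.ne' : (k:ℝ) ≠ 0), Real.rpow_one] at h1
  set h : ℕ → ℝ := fun n => L' ^ (1 - ((n % k : ℕ) : ℝ) / n) * M ^ ((k : ℝ) / n) with hh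
  have hmod : Tendsto (fun n : ℕ => ((n % k : ℕ) : ℝ) / n) atTop (nhds 0) := by
    apply squeeze_zero (fun n => by positivity) (fun n => ?_)
      (tendsto_const_div_atTop_nhds_zero_nat (k:ℝ))
    rcases Nat.eq_zero_or_pos n with h0 | h0
    · simp [h0]
    · exact (div_le_div_iff_of_pos_right (by exact_mod_cast h0)).2
        (by exact_mod_cast (Nat.mod_lt n hkpos).le)
  have htendh : Tendsto h atTop (nhds L') := by
    have t1 : Tendsto (fun n : ℕ => L' ^ (1 - ((n % k : ℕ):ℝ)/n)) atTop
        (nhds (L' ^ ((1:ℝ) - 0))) :=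
      Filter.Tendsto.rpow tendsto_const_nhds (tendsto_const_nhds.sub hmod) (Or.inl hL'pos.ne')
    have t2 : Tendsto (fun n : ℕ => M ^ ((k:ℝ)/n)) atTop (nhds (M ^ (0:ℝ))) :=
      Filter.Tendsto.rpow tendsto_const_nhds (tendsto_const_div_atTop_nhds_zero_nat (k:ℝ))
        (Or.inl (by linarith : M ≠ 0))
    have := t1.mul t2
    simpa using this
  have hbound : ∀ n, 1 ≤ n → a n ≤ h n := by
    intro n hn
    have hn0 : (0:ℝ) < (n:ℝ) := by exact_mod_cast hn
    set q := n / k with hq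
    set r := n % k with hr
    have hrk : r < k := Nat.mod_lt n hkpos
    have hdm : k * q + r = n := Nat.div_add_mod n k
    have h4 : m n ≤ L' ^ (k*q) * M ^ r := by
      calc m n ≤ m k ^ q * m r := by rw [← hdm]; exact chebInf_mul_add_le hK hne k q r
        _ ≤ (L'^k)^q * M^r :=
            mul_le_mul (pow_le_pow_left₀ (hm0 k) hmk.le q) (hmM r) (hm0 r) (by positivity)
        _ = L' ^ (k*q) * M ^ r := by rw [← pow_mul]
    have h5 : a n ≤ (L' ^ (k*q) * M ^ r) ^ ((n:ℝ)⁻¹) :=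
      Real.rpow_le_rpow (hm0 n) h4 (by positivity)
    have h6 : (L' ^ (k*q) * M ^ r : ℝ) ^ ((n:ℝ)⁻¹)
        = L' ^ (((k*q : ℕ):ℝ) / n) * M ^ ((r:ℝ)/n) := by
      rw [Real.mul_rpow (by positivity) (by positivity),
          ← Real.rpow_natCast L' (k*q), ← Real.rpow_natCast M r,
          ← Real.rpow_mul hL'pos.le, ← Real.rpow_mul (by positivity : (0:ℝ) ≤ M)]
      rw [div_eq_mul_inv, div_eq_mul_inv]
    have hcast : ((k*q : ℕ):ℝ)/n = 1 - (r:ℝ)/n := by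
      rw [eq_sub_iff_add_eq, ← add_div, div_eq_one_iff_eq hn0.ne']
      exact_mod_cast hdm
    have h8 : M ^ ((r:ℝ)/n) ≤ M ^ ((k:ℝ)/n) :=
      Real.rpow_le_rpow_of_exponent_le hM1
        ((div_le_div_iff_of_pos_right hn0).2 (by exact_mod_cast hrk.le))
    calc a n ≤ (L' ^ (k*q) * M ^ r) ^ ((n:ℝ)⁻¹) := h5
      _ = L' ^ (1 - (r:ℝ)/n) * M ^ ((r:ℝ)/n) := by rw [h6, hcast]
      _ ≤ L' ^ (1 - (r:ℝ)/n) * M ^ ((k:ℝ)/n) :=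
          mul_le_mul_of_nonneg_left h8 (Real.rpow_nonneg hL'pos.le _)
      _ = h n := rfl
  have hL'lt : L' < L + ε := by rw [hL']; linarith
  have hev : ∀ᶠ n in atTop, h n < L + ε := htendh.eventually_lt_const hL'lt
  obtain ⟨N, hN⟩ := (eventually_atTop.1 hev)
  refine ⟨max N 1, fun n hn => ?_⟩
  have hn1 : 1 ≤ n := le_trans (le_max_right N 1) hn
  have hnN : N ≤ n := le_trans (le_max_left N 1) hn
  have h1 : a n < L + ε := lt_of_le_of_lt (hbound n hn1) (hN n hnN)
  have h2 : L ≤ a n := hLa n hn1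
  rw [Real.dist_eq, abs_lt]
  constructor <;> linarith
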